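/- Let m, n ≥ 2 and let G be the ordered graph on vertices v_1, ..., v_{m+n} whose only edges are the two crossing edges v_1 v_{m+1} and v_m v_{m+n}. Then R(G) = m + n + max(m,n) - 1. -/

import Mathlib

/-- A `t`-edge-coloring `c` of the complete graph on the ordered vertex set `Fin N`
contains a monochromatic ordered copy of the ordered graph `G` on `Fin M`. -/
def HasMonoCopy {M N t : ℕ} (G : SimpleGraph (Fin M)) (c : Fin N → Fin N → Fin t) : Prop :=
  ∃ k : Fin t, ∃ f : Fin M → Fin N, StrictMono f ∧
    ∀ u v : Fin M, u < v → G.Adj u v → c (f u) (f v) = k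

/-- The `t`-color ordered Ramsey number of the ordered graph `G`: the least `N` such that
every `t`-coloring of the edges of the complete graph on `Fin N` contains a monochromatic
ordered copy of `G`. -/
noncomputable def orderedRamsey {M : ℕ} (t : ℕ) (G : SimpleGraph (Fin M)) : ℕ :=
  sInf {N : ℕ | ∀ c : Fin N → Fin N → Fin t, HasMonoCopy G c}

/-- An interval coloring of an ordered graph with `k` parts, encoded as a monotone
surjection onto `Fin k` whose fibers (the parts, which are intervals of consecutive
vertices) are independent sets. -/
def IsIntervalColoring {N k : ℕ} (G : SimpleGraph (Fin N)) (p : Fin N → Fin k) : Prop :=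
  Monotone p ∧ Function.Surjective p ∧ ∀ u v : Fin N, G.Adj u v → p u ≠ p v

/-- The interval chromatic number of an ordered graph. -/
noncomputable def intervalChromatic {N : ℕ} (G : SimpleGraph (Fin N)) : ℕ :=
  sInf {k : ℕ | ∃ p : Fin N → Fin k, IsIntervalColoring G p}

/-- Value map used to build an ordered copy of the two-crossing-edge graph from a
quadruple `a < b < e < d` with `b - a ≥ m - 1` and `d - e ≥ n - 1`. -/
def quadMap (m n a b e d : ℕ) : ℕ → ℕ := fun i =>
  if i = 0 then a else if i ≤ m - 1 then b - (m - 1) + i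
  else if i = m then e else d - (m + n - 1) + i

/-- A strictly monotone map between `Fin` types grows at least linearly. -/
lemma strictMono_gap {M N : ℕ} (f : Fin M → Fin N) (hf : StrictMono f) :
    ∀ (dd : ℕ) (i j : Fin M), (i : ℕ) + dd = (j : ℕ) → (f i : ℕ) + dd ≤ (f j : ℕ) := by
  intro dd
  induction dd with
  | zero =>
    intro i j h
    have : i = j := Fin.ext (by omega)
    simp [this]
  | succ dd ih =>
    intro i j h
    have hj' : (i : ℕ) + dd < M := by have := j.isLt; omega
    have h1 := ih i ⟨(i : ℕ) + dd, hj'⟩ rfl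
    have h2 : f ⟨(i : ℕ) + dd, hj'⟩ < f j := hf (by rw [Fin.lt_def]; simp; omega)
    rw [Fin.lt_def] at h2
    simp only [Fin.val_fin_lt] at *
    omega

/-- From a suitable quadruple `a < b < e < d` with matching colors, build a
monochromatic ordered copy of the two-crossing-edge graph. -/
lemma copy_of_quad {m n N : ℕ} (hm : 2 ≤ m) (hn : 2 ≤ n)
    (G : SimpleGraph (Fin (m + n)))
    (hG : G = SimpleGraph.fromEdgeSet
      {s((⟨0, by have := hm; omega⟩ : Fin (m + n)), (⟨m, by have := hm; omega⟩ : Fin (m + n))),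
       s((⟨m - 1, by have := hm; omega⟩ : Fin (m + n)), (⟨m + n - 1, by have := hm; omega⟩ : Fin (m + n)))})
    (c : Fin N → Fin N → Fin 2) (a b e d : Fin N)
    (h1 : (a : ℕ) + (m - 1) ≤ b) (h2 : (b : ℕ) < e) (h3 : (e : ℕ) + (n - 1) ≤ d)
    (hcol : c a e = c b d) : HasMonoCopy G c := by
  have ha := a.isLt; have hb := b.isLt; have he := e.isLt; have hd := d.isLt
  have key : ∀ i : Fin (m + n), quadMap m n (a : ℕ) (b : ℕ) (e : ℕ) (d : ℕ) (i : ℕ) < N := by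
    intro i
    have := i.isLt
    simp only [quadMap]
    split_ifs <;> omega
  refine ⟨c a e, fun i => ⟨quadMap m n (a : ℕ) (b : ℕ) (e : ℕ) (d : ℕ) (i : ℕ), key i⟩, ?_, ?_⟩
  · intro i j hij
    rw [Fin.lt_def] at hij
    simp only [Fin.mk_lt_mk]
    have hi := i.isLt; have hj := j.isLt
    simp only [quadMap]
    split_ifs <;> omega
  · intro u v huv hadj
    rw [hG, SimpleGraph.fromEdgeSet_adj] at hadj
    obtain ⟨hmem, -⟩ := hadj
    rw [Fin.lt_def] at huv
    have hu := u.isLt; have hv := v.isLt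
    simp only [Set.mem_insert_iff, Set.mem_singleton_iff, Sym2.eq_iff, Fin.ext_iff] at hmem
    have goal1 : ∀ (x y : Fin N), quadMap m n (a:ℕ) (b:ℕ) (e:ℕ) (d:ℕ) (u:ℕ) = (x:ℕ) →
        quadMap m n (a:ℕ) (b:ℕ) (e:ℕ) (d:ℕ) (v:ℕ) = (y:ℕ) → c x y = c a e →
        c (⟨quadMap m n (a:ℕ) (b:ℕ) (e:ℕ) (d:ℕ) (u:ℕ), key u⟩ : Fin N)
          (⟨quadMap m n (a:ℕ) (b:ℕ) (e:ℕ) (d:ℕ) (v:ℕ), key v⟩ : Fin N) = c a e := by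
      intro x y hx hy hxy
      have hxx : (⟨quadMap m n (a:ℕ) (b:ℕ) (e:ℕ) (d:ℕ) (u:ℕ), key u⟩ : Fin N) = x := Fin.ext hx
      rw [hxx]
      have hyy : (⟨quadMap m n (a:ℕ) (b:ℕ) (e:ℕ) (d:ℕ) (v:ℕ), key v⟩ : Fin N) = y := Fin.ext hy
      rw [hyy]
      exact hxy
    rcases hmem with (⟨hu0, hvm⟩ | ⟨hum, hv0⟩) | (⟨hum1, hvn⟩ | ⟨hun, hvm1⟩)
    · exact goal1 a e (by simp only [quadMap]; split_ifs <;> omega)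
        (by simp only [quadMap]; split_ifs <;> omega) rfl
    · omega
    · exact goal1 b d (by simp only [quadMap]; split_ifs <;> omega)
        (by simp only [quadMap]; split_ifs <;> omega) hcol.symm
    · omega

/-- From a monochromatic ordered copy of the two-crossing-edge graph, extract a
quadruple `a < b < e < d` with the required gaps and matching colors. -/
lemma quad_of_copy {m n N : ℕ} (hm : 2 ≤ m) (hn : 2 ≤ n)
    (G : SimpleGraph (Fin (m + n)))
    (hG : G = SimpleGraph.fromEdgeSet
      {s((⟨0, by have := hm; omega⟩ : Fin (m + n)), (⟨m, by have := hm; omega⟩ : Fin (m + n))),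
       s((⟨m - 1, by have := hm; omega⟩ : Fin (m + n)), (⟨m + n - 1, by have := hm; omega⟩ : Fin (m + n)))})
    (c : Fin N → Fin N → Fin 2) (h : HasMonoCopy G c) :
    ∃ a b e d : Fin N,
      (a : ℕ) + (m - 1) ≤ b ∧ (b : ℕ) < e ∧ (e : ℕ) + (n - 1) ≤ d ∧ c a e = c b d := by
  obtain ⟨k, f, hf, hedge⟩ := h
  have p0 : (0 : ℕ) < m + n := by omega
  have pm : m < m + n := by omega
  have pm1 : m - 1 < m + n := by omega
  have pn1 : m + n - 1 < m + n := by omega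
  have adj1 : G.Adj ⟨0, p0⟩ ⟨m, pm⟩ := by
    rw [hG, SimpleGraph.fromEdgeSet_adj]
    refine ⟨Set.mem_insert _ _, ?_⟩
    simp only [ne_eq, Fin.ext_iff]
    omega
  have adj2 : G.Adj ⟨m - 1, pm1⟩ ⟨m + n - 1, pn1⟩ := by
    rw [hG, SimpleGraph.fromEdgeSet_adj]
    refine ⟨Set.mem_insert_of_mem _ rfl, ?_⟩
    simp only [ne_eq, Fin.ext_iff]
    omega
  have hc1 : c (f ⟨0, p0⟩) (f ⟨m, pm⟩) = k :=
    hedge _ _ (by simp only [Fin.mk_lt_mk]; omega) adj1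
  have hc2 : c (f ⟨m - 1, pm1⟩) (f ⟨m + n - 1, pn1⟩) = k :=
    hedge _ _ (by simp only [Fin.mk_lt_mk]; omega) adj2
  have g1 : (f ⟨0, p0⟩ : ℕ) + (m - 1) ≤ (f ⟨m - 1, pm1⟩ : ℕ) :=
    strictMono_gap f hf (m - 1) _ _ (by simp only [Fin.val_mk]; omega)
  have g2 : (f ⟨m - 1, pm1⟩ : ℕ) < (f ⟨m, pm⟩ : ℕ) := by
    have := hf (show (⟨m - 1, pm1⟩ : Fin (m + n)) < ⟨m, pm⟩ by
      simp only [Fin.mk_lt_mk]; omega)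
    rwa [Fin.lt_def] at this
  have g3 : (f ⟨m, pm⟩ : ℕ) + (n - 1) ≤ (f ⟨m + n - 1, pn1⟩ : ℕ) :=
    strictMono_gap f hf (n - 1) _ _ (by simp only [Fin.val_mk]; omega)
  exact ⟨f ⟨0, p0⟩, f ⟨m - 1, pm1⟩, f ⟨m, pm⟩, f ⟨m + n - 1, pn1⟩, g1, g2, g3,
    hc1.trans hc2.symm⟩

/-- Upper bound: every 2-coloring of the complete graph on `m + n + max m n - 1`
ordered vertices contains a monochromatic ordered copy of the two-crossing-edge graph. -/
lemma ramsey_upper' {m n : ℕ} (hm : 2 ≤ m) (hn : 2 ≤ n)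
    (G : SimpleGraph (Fin (m + n)))
    (hG : G = SimpleGraph.fromEdgeSet
      {s((⟨0, by have := hm; omega⟩ : Fin (m + n)), (⟨m, by have := hm; omega⟩ : Fin (m + n))),
       s((⟨m - 1, by have := hm; omega⟩ : Fin (m + n)), (⟨m + n - 1, by have := hm; omega⟩ : Fin (m + n)))})
    (c : Fin (m + n + max m n - 1) → Fin (m + n + max m n - 1) → Fin 2) :
    HasMonoCopy G c := by
  have hmx : m ≤ max m n := le_max_left m n
  have hnx : n ≤ max m n := le_max_right m n
  rcases le_total m n with h | h
  · let x0 : Fin (m + n + max m n - 1) := ⟨0, by omega⟩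
    let x1 : Fin (m + n + max m n - 1) := ⟨m - 1, by omega⟩
    let x2 : Fin (m + n + max m n - 1) := ⟨m, by omega⟩
    let x3 : Fin (m + n + max m n - 1) := ⟨m + n - 2, by omega⟩
    let x4 : Fin (m + n + max m n - 1) := ⟨m + n - 1, by omega⟩
    let x5 : Fin (m + n + max m n - 1) := ⟨m + 2 * n - 2, by omega⟩
    by_cases H1 : c x0 x4 = c x1 x5
    · exact copy_of_quad hm hn G hG c x0 x1 x4 x5 (by simp [x0, x1]) (by simp [x1, x4]; omega)
        (by simp [x4, x5]; omega) H1
    by_cases H2 : c x0 x4 = c x3 x5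
    · exact copy_of_quad hm hn G hG c x0 x3 x4 x5 (by simp [x0, x3]; omega)
        (by simp [x3, x4]; omega) (by simp [x4, x5]; omega) H2
    by_cases H3 : c x0 x2 = c x1 x5
    · exact copy_of_quad hm hn G hG c x0 x1 x2 x5 (by simp [x0, x1]) (by simp [x1, x2]; omega)
        (by simp [x2, x5]; omega) H3
    by_cases H4 : c x0 x2 = c x1 x4
    · exact copy_of_quad hm hn G hG c x0 x1 x2 x4 (by simp [x0, x1]) (by simp [x1, x2]; omega)
        (by simp [x2, x4]; omega) H4
    by_cases H5 : c x1 x4 = c x3 x5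
    · exact copy_of_quad hm hn G hG c x1 x3 x4 x5 (by simp [x1, x3]; omega)
        (by simp [x3, x4]; omega) (by simp [x4, x5]; omega) H5
    exfalso
    simp only [Fin.ext_iff] at H1 H2 H3 H4 H5
    have b1 := (c x0 x4).isLt
    have b2 := (c x1 x5).isLt
    have b3 := (c x3 x5).isLt
    have b4 := (c x0 x2).isLt
    have b5 := (c x1 x4).isLt
    omega
  · let y0 : Fin (m + n + max m n - 1) := ⟨0, by omega⟩
    let y1 : Fin (m + n + max m n - 1) := ⟨m - 1, by omega⟩
    let y2 : Fin (m + n + max m n - 1) := ⟨m, by omega⟩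
    let y3 : Fin (m + n + max m n - 1) := ⟨2 * m - 2, by omega⟩
    let y4 : Fin (m + n + max m n - 1) := ⟨2 * m - 1, by omega⟩
    let y5 : Fin (m + n + max m n - 1) := ⟨2 * m + n - 2, by omega⟩
    by_cases H1 : c y0 y4 = c y1 y5
    · exact copy_of_quad hm hn G hG c y0 y1 y4 y5 (by simp [y0, y1]) (by simp [y1, y4]; omega)
        (by simp [y4, y5]; omega) H1
    by_cases H2 : c y0 y2 = c y1 y5
    · exact copy_of_quad hm hn G hG c y0 y1 y2 y5 (by simp [y0, y1]) (by simp [y1, y2]; omega)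
        (by simp [y2, y5]; omega) H2
    by_cases H3 : c y0 y4 = c y3 y5
    · exact copy_of_quad hm hn G hG c y0 y3 y4 y5 (by simp [y0, y3]; omega)
        (by simp [y3, y4]; omega) (by simp [y4, y5]; omega) H3
    by_cases H4 : c y1 y4 = c y3 y5
    · exact copy_of_quad hm hn G hG c y1 y3 y4 y5 (by simp [y1, y3]; omega)
        (by simp [y3, y4]; omega) (by simp [y4, y5]; omega) H4
    by_cases H5 : c y0 y2 = c y1 y4
    · exact copy_of_quad hm hn G hG c y0 y1 y2 y4 (by simp [y0, y1]) (by simp [y1, y2]; omega)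
        (by simp [y2, y4]; omega) H5
    exfalso
    simp only [Fin.ext_iff] at H1 H2 H3 H4 H5
    have b1 := (c y0 y4).isLt
    have b2 := (c y1 y5).isLt
    have b3 := (c y0 y2).isLt
    have b4 := (c y1 y4).isLt
    have b5 := (c y3 y5).isLt
    omega

/-- Lower bound: on fewer than `m + n + max m n - 1` ordered vertices there is a
2-coloring (a two-block interval coloring) with no monochromatic ordered copy. -/
lemma ramsey_lower {m n N : ℕ} (hm : 2 ≤ m) (hn : 2 ≤ n)
    (G : SimpleGraph (Fin (m + n)))
    (hG : G = SimpleGraph.fromEdgeSet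
      {s((⟨0, by have := hm; omega⟩ : Fin (m + n)), (⟨m, by have := hm; omega⟩ : Fin (m + n))),
       s((⟨m - 1, by have := hm; omega⟩ : Fin (m + n)), (⟨m + n - 1, by have := hm; omega⟩ : Fin (m + n)))})
    (hN : N + 2 ≤ m + n + max m n) :
    ∃ c : Fin N → Fin N → Fin 2, ¬ HasMonoCopy G c := by
  classical
  set s : ℕ := if m ≤ n then m + n - 1 else m - 1 with hs
  refine ⟨fun u v => if ((u : ℕ) < s ↔ (v : ℕ) < s) then 0 else 1, fun h => ?_⟩
  obtain ⟨a, b, e, d, g1, g2, g3, hcol⟩ := quad_of_copy hm hn G hG _ h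
  have hd := d.isLt
  have hmx : m ≤ max m n := le_max_left m n
  have hnx : n ≤ max m n := le_max_right m n
  by_cases P1 : ((a : ℕ) < s ↔ (e : ℕ) < s) <;> by_cases P2 : ((b : ℕ) < s ↔ (d : ℕ) < s)
  · rcases le_or_gt m n with hmn | hmn
    · have hs' : s = m + n - 1 := by rw [hs, if_pos hmn]
      rw [hs'] at P1 P2
      have hmax : max m n = n := max_eq_right hmn
      omega
    · have hs' : s = m - 1 := by rw [hs, if_neg (not_le.mpr hmn)]
      rw [hs'] at P1 P2
      have hmax : max m n = m := max_eq_left hmn.le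
      omega
  · rw [if_pos P1, if_neg P2] at hcol
    exact absurd hcol (by decide)
  · rw [if_neg P1, if_pos P2] at hcol
    exact absurd hcol (by decide)
  · rcases le_or_gt m n with hmn | hmn
    · have hs' : s = m + n - 1 := by rw [hs, if_pos hmn]
      rw [hs'] at P1 P2
      have hmax : max m n = n := max_eq_right hmn
      omega
    · have hs' : s = m - 1 := by rw [hs, if_neg (not_le.mpr hmn)]
      rw [hs'] at P1 P2
      have hmax : max m n = m := max_eq_left hmn.le
      omega

/-- If `G` is the ordered graph on `v_1,…,v_{m+n}` whose only edges are the crossing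
edges `v_1 v_{m+1}` and `v_m v_{m+n}`, then `R(G) = m + n + max(m,n) - 1`. -/
theorem stmt6 {m n : ℕ} (hm : 2 ≤ m) (hn : 2 ≤ n)
    (G : SimpleGraph (Fin (m + n)))
    (hG : G = SimpleGraph.fromEdgeSet
      {s((⟨0, by omega⟩ : Fin (m + n)), (⟨m, by omega⟩ : Fin (m + n))),
       s((⟨m - 1, by omega⟩ : Fin (m + n)), (⟨m + n - 1, by omega⟩ : Fin (m + n)))}) :
    orderedRamsey 2 G = m + n + max m n - 1 := by
  have hub : ∀ c : Fin (m + n + max m n - 1) → Fin (m + n + max m n - 1) → Fin 2,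
      HasMonoCopy G c := ramsey_upper' hm hn G hG
  have hmx : m ≤ max m n := le_max_left m n
  apply le_antisymm
  · exact Nat.sInf_le hub
  · refine le_csInf ⟨_, hub⟩ ?_
    intro N hN
    by_contra hlt
    push_neg at hlt
    obtain ⟨cbad, hcbad⟩ := ramsey_lower hm hn G hG (N := N) (by omega)
    exact hcbad (hN cbad)
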